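/- Let f be an extended quadratic function with constraint set {x : Fx+g = 0} nonempty, with free parameter representation x_0, V_2 (columns of V_2 spanning the nullspace of F). Then f(x) ≥ 0 for all x ∈ R^n if and only if the matrix [V_2, x_0; 0, 1]^T [[P, q],[q^T, r]] [V_2, x_0; 0, 1] is positive semidefinite. -/

import Mathlib

open Matrix

noncomputable def quadPart {n : ℕ} (P : Matrix (Fin n) (Fin n) ℝ) (q : Fin n → ℝ) (r : ℝ)
    (x : Fin n → ℝ) : ℝ :=
  (1 / 2) * (x ⬝ᵥ P.mulVec x + 2 * (q ⬝ᵥ x) + r)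

noncomputable def extQuad {n : ℕ} {ι : Type} [Fintype ι]
    (P : Matrix (Fin n) (Fin n) ℝ) (q : Fin n → ℝ) (r : ℝ)
    (F : Matrix ι (Fin n) ℝ) (g : ι → ℝ) (x : Fin n → ℝ) : EReal :=
  if F.mulVec x + g = 0 then ((quadPart P q r x : ℝ) : EReal) else ⊤

private theorem quad_coeff_nonneg (a b c : ℝ) (h : ∀ s : ℝ, 0 ≤ a * s ^ 2 + b * s + c) :
    0 ≤ a := by
  by_contra ha
  push_neg at ha
  set s := Real.sqrt ((|c| + 1) / (-a)) with hs
  have hs2 : s ^ 2 = (|c| + 1) / (-a) :=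
    Real.sq_sqrt (le_of_lt (div_pos (by positivity) (neg_pos.2 ha)))
  have h3 : a * s ^ 2 = -(|c| + 1) := by
    rw [hs2]
    field_simp [ha.ne]
  have h1 := h s
  have h2 := h (-s)
  have h4 := le_abs_self c
  nlinarith

private theorem key_quadform {n l : ℕ} (P : Matrix (Fin n) (Fin n) ℝ) (q : Fin n → ℝ) (r : ℝ)
    (x₀ : Fin n → ℝ) (V₂ : Matrix (Fin n) (Fin l) ℝ) (v : Fin l ⊕ Unit → ℝ) :
    v ⬝ᵥ ((Matrix.fromBlocks V₂ (Matrix.of fun i (_ : Unit) => x₀ i) (0 : Matrix Unit (Fin l) ℝ) (1 : Matrix Unit Unit ℝ)).transpose *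
        (Matrix.fromBlocks P (Matrix.of fun i (_ : Unit) => q i)
          (Matrix.of fun (_ : Unit) j => q j) (Matrix.of fun (_ : Unit) (_ : Unit) => r))
        * (Matrix.fromBlocks V₂ (Matrix.of fun i (_ : Unit) => x₀ i) (0 : Matrix Unit (Fin l) ℝ) (1 : Matrix Unit Unit ℝ))) *ᵥ v =
      (V₂ *ᵥ (v ∘ Sum.inl) + v (Sum.inr ()) • x₀) ⬝ᵥ
        P *ᵥ (V₂ *ᵥ (v ∘ Sum.inl) + v (Sum.inr ()) • x₀) +
      2 * (q ⬝ᵥ (V₂ *ᵥ (v ∘ Sum.inl) + v (Sum.inr ()) • x₀)) * v (Sum.inr ()) +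
      r * v (Sum.inr ()) ^ 2 := by
  set z := v ∘ Sum.inl with hz
  set t := v (Sum.inr ()) with ht
  set y := V₂ *ᵥ z + t • x₀ with hy
  set A := Matrix.fromBlocks V₂ (Matrix.of fun i (_ : Unit) => x₀ i) 0 (1 : Matrix Unit Unit ℝ)
    with hA
  have hAv : A *ᵥ v = Sum.elim y (fun _ => t) := by
    rw [hA, fromBlocks_mulVec]
    ext i
    cases i <;> simp [hy, mulVec, dotProduct, ht, mul_comm, hz]
  rw [← Matrix.mulVec_mulVec, ← Matrix.mulVec_mulVec, hAv, dotProduct_mulVec,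
    vecMul_transpose, hAv]
  rw [fromBlocks_mulVec]
  simp only [Sum.elim_comp_inl, Sum.elim_comp_inr]
  have h1 : (Matrix.of fun i (_ : Unit) => q i) *ᵥ (fun _ => t) = t • q := by
    ext i; simp [mulVec, dotProduct, mul_comm]
  have h2 : (Matrix.of fun (_ : Unit) j => q j) *ᵥ y = fun _ => q ⬝ᵥ y := by
    ext u; simp [mulVec, dotProduct]
  have h3 : (Matrix.of fun (_ : Unit) (_ : Unit) => r) *ᵥ (fun _ => t) = fun _ => r * t := by
    ext u; simp [mulVec, dotProduct]
  rw [h1, h2, h3, sumElim_dotProduct_sumElim, dotProduct_add, dotProduct_smul]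
  simp only [dotProduct, Pi.add_apply, Fintype.sum_unique, smul_eq_mul]
  have hc : ∑ x : Fin n, (V₂ *ᵥ z + t • x₀) x * q x
      = ∑ x : Fin n, q x * (V₂ *ᵥ z + t • x₀) x := by
    simp [mul_comm]
  ring_nf
  rw [hc]
  ring

theorem extQuad_nonneg_iff {n l p : ℕ}
    (P : Matrix (Fin n) (Fin n) ℝ) (hP : P.IsSymm) (q : Fin n → ℝ) (r : ℝ)
    (F : Matrix (Fin p) (Fin n) ℝ) (g : Fin p → ℝ)
    (x₀ : Fin n → ℝ) (hx₀ : F.mulVec x₀ + g = 0)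
    (V₂ : Matrix (Fin n) (Fin l) ℝ)
    (hV₂ : ∀ x, F.mulVec x = 0 ↔ ∃ z, x = V₂.mulVec z)
    (hV₂inj : ∀ z, V₂.mulVec z = 0 → z = 0) :
    (∀ x, (0 : EReal) ≤ extQuad P q r F g x) ↔
      ((Matrix.fromBlocks V₂ (Matrix.of fun i (_ : Unit) => x₀ i) (0 : Matrix Unit (Fin l) ℝ) (1 : Matrix Unit Unit ℝ)).transpose *
        (Matrix.fromBlocks P (Matrix.of fun i (_ : Unit) => q i)
          (Matrix.of fun (_ : Unit) j => q j) (Matrix.of fun (_ : Unit) (_ : Unit) => r)) *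
        (Matrix.fromBlocks V₂ (Matrix.of fun i (_ : Unit) => x₀ i) (0 : Matrix Unit (Fin l) ℝ) (1 : Matrix Unit Unit ℝ))).PosSemidef := by
  have hmem : ∀ z : Fin l → ℝ, F *ᵥ (x₀ + V₂ *ᵥ z) + g = 0 := by
    intro z
    have h0 : F *ᵥ (V₂ *ᵥ z) = 0 := (hV₂ _).2 ⟨z, rfl⟩
    rw [mulVec_add, h0, add_zero]
    exact hx₀
  constructor
  · intro h
    have hfin : ∀ x, F *ᵥ x + g = 0 → 0 ≤ quadPart P q r x := by
      intro x hx
      have hh := h x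
      rw [extQuad, if_pos hx] at hh
      exact EReal.coe_nonneg.1 hh
    rw [posSemidef_iff_dotProduct_mulVec]
    constructor
    · -- Hermitian
      have hQ : (Matrix.fromBlocks P (Matrix.of fun i (_ : Unit) => q i)
          (Matrix.of fun (_ : Unit) j => q j)
          (Matrix.of fun (_ : Unit) (_ : Unit) => r)).IsHermitian := by
        rw [Matrix.IsHermitian]
        ext i j
        cases i <;> cases j <;>
          simp [Matrix.conjTranspose_apply, Matrix.fromBlocks, hP.apply]
      have hA : (Matrix.fromBlocks V₂ (Matrix.of fun i (_ : Unit) => x₀ i) 0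
          (1 : Matrix Unit Unit ℝ)).transpose
          = (Matrix.fromBlocks V₂ (Matrix.of fun i (_ : Unit) => x₀ i) 0
          (1 : Matrix Unit Unit ℝ)).conjTranspose := by
        ext i j; simp [Matrix.conjTranspose_apply]
      rw [hA]
      exact isHermitian_conjTranspose_mul_mul _ hQ
    · intro v
      rw [star_trivial, key_quadform]
      set z := v ∘ Sum.inl with hzdef
      set t := v (Sum.inr ()) with htdef
      by_cases ht : t = 0
      · rw [ht]
        simp only [zero_smul, add_zero, mul_zero, zero_pow, ne_eq, OfNat.ofNat_ne_zero,
          not_false_eq_true]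
        ring_nf
        set w := V₂ *ᵥ z with hw
        have key : ∀ s : ℝ, 0 ≤ (w ⬝ᵥ P *ᵥ w) * s ^ 2
            + (x₀ ⬝ᵥ P *ᵥ w + w ⬝ᵥ P *ᵥ x₀ + 2 * (q ⬝ᵥ w)) * s
            + (x₀ ⬝ᵥ P *ᵥ x₀ + 2 * (q ⬝ᵥ x₀) + r) := by
          intro s
          have hx : F *ᵥ (x₀ + s • w) + g = 0 := by
            have := hmem (s • z)
            rwa [mulVec_smul] at this
          have h2 := hfin _ hx
          rw [quadPart] at h2
          have h3 : (x₀ + s • w) ⬝ᵥ P *ᵥ (x₀ + s • w) + 2 * (q ⬝ᵥ (x₀ + s • w)) + r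
              = (w ⬝ᵥ P *ᵥ w) * s ^ 2
              + (x₀ ⬝ᵥ P *ᵥ w + w ⬝ᵥ P *ᵥ x₀ + 2 * (q ⬝ᵥ w)) * s
              + (x₀ ⬝ᵥ P *ᵥ x₀ + 2 * (q ⬝ᵥ x₀) + r) := by
            simp only [mulVec_add, mulVec_smul, dotProduct_add, add_dotProduct,
              dotProduct_smul, smul_dotProduct, smul_eq_mul]
            ring
          rw [h3] at h2
          linarith
        have := quad_coeff_nonneg _ _ _ key
        linarith [this]
      · set x' := x₀ + V₂ *ᵥ (t⁻¹ • z) with hx'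
        have h2 := hfin x' (hmem _)
        have hyx : V₂ *ᵥ z + t • x₀ = t • x' := by
          rw [hx', mulVec_smul, smul_add, smul_smul, mul_inv_cancel₀ ht, one_smul, add_comm]
        rw [hyx]
        have h3 : (t • x') ⬝ᵥ P *ᵥ (t • x') + 2 * (q ⬝ᵥ (t • x')) * t + r * t ^ 2
            = (2 * t ^ 2) * quadPart P q r x' := by
          rw [quadPart]
          simp only [mulVec_smul, dotProduct_smul, smul_dotProduct, smul_eq_mul]
          ring
        rw [h3]
        positivity
  · intro hpsd x
    by_cases hx : F *ᵥ x + g = 0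
    · have hFx : F *ᵥ (x - x₀) = 0 := by
        rw [mulVec_sub, sub_eq_zero]
        have : F *ᵥ x + g = F *ᵥ x₀ + g := by rw [hx, hx₀]
        exact add_right_cancel this
      obtain ⟨z, hz⟩ := (hV₂ _).1 hFx
      have hxz : x = x₀ + V₂ *ᵥ z := by
        rw [← hz]
        abel
      have hq := hpsd.dotProduct_mulVec_nonneg (Sum.elim z (fun _ => 1))
      rw [star_trivial, key_quadform] at hq
      simp only [Sum.elim_comp_inl, Sum.elim_inr, one_smul, mul_one, one_pow] at hq
      have hy : V₂ *ᵥ z + x₀ = x := by rw [hxz, add_comm]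
      rw [hy] at hq
      rw [extQuad, if_pos hx]
      refine EReal.coe_nonneg.2 ?_
      rw [quadPart]
      linarith
    · rw [extQuad, if_neg hx]
      exact le_top
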